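/- arXiv:1411.4573 — 2 statements merged into one kernel-verified Lean document; each statement's English description precedes it below -/
import Mathlib

section
/- For every instance of multi-depot k-MLP with positive integer edge costs and every time horizon T, the optimal value of the configuration linear program (LP2_P) is at least BNSLB = ∑_{ℓ=1}^{n} BNS(k,ℓ); i.e., every feasible solution (x,z) of (LP2_P) has objective value ∑_{v,t} t·x_{v,t} ≥ BNSLB. -/
open Finset

/-- `c` is a metric with positive integer costs between distinct nodes. -/
def IsIntMetric {V : Type*} (c : V → V → ℕ) : Prop :=
  (∀ u, c u u = 0) ∧ (∀ u v, c u v = c v u) ∧ (∀ u v x, c u x ≤ c u v + c v x) ∧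
    ∀ u v, u ≠ v → 1 ≤ c u v

/-- Cost of a walk (a list of vertices): sum of costs of consecutive edges. -/
def walkCost {V : Type*} (c : V → V → ℕ) : List V → ℕ
  | [] => 0
  | [_] => 0
  | a :: b :: l => c a b + walkCost c (b :: l)

/-- `P⃗` is a configuration for time `t`: a `k`-tuple of simple paths, the `i`-th rooted
at `r i`, each of total edge cost at most `t`. -/
def IsConfig {V : Type*} {k : ℕ} (c : V → V → ℕ) (r : Fin k → V) (t : ℕ)
    (P : Fin k → List V) : Prop :=
  ∀ i, (P i).Nodup ∧ (P i).head? = some (r i) ∧ walkCost c (P i) ≤ t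

/-- The `(k,ℓ)`-bottleneck-stroll value `BNS(k,ℓ)`. -/
noncomputable def BNS {V : Type*} [Fintype V] [DecidableEq V] {k : ℕ}
    (c : V → V → ℕ) (r : Fin k → V) (ℓ : ℕ) : ℕ :=
  sInf {m : ℕ | ∃ P : Fin k → List V,
    (∀ i, (P i).head? = some (r i)) ∧
    ℓ ≤ (Finset.univ.biUnion fun i => (P i).toFinset).card ∧
    ∀ i, walkCost c (P i) ≤ m}

/-- `BNSLB = ∑_{ℓ=1}^n BNS(k,ℓ)`. -/
noncomputable def BNSLB {V : Type*} [Fintype V] [DecidableEq V] {k : ℕ}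
    (c : V → V → ℕ) (r : Fin k → V) : ℕ :=
  ∑ ℓ ∈ Finset.Icc 1 (Fintype.card V), BNS c r ℓ

lemma head?_mem_aux {V : Type*} {l : List V} {a : V} (h : l.head? = some a) : a ∈ l := by
  cases l with
  | nil => simp at h
  | cons b t =>
    simp only [List.head?_cons, Option.some.injEq] at h
    simp [h]

lemma BNS_le_of_witness {V : Type*} [Fintype V] [DecidableEq V] {k : ℕ}
    (c : V → V → ℕ) (r : Fin k → V) {ℓ t : ℕ} (P : Fin k → List V)
    (h1 : ∀ i, (P i).head? = some (r i))
    (h2 : ∀ i, walkCost c (P i) ≤ t)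
    (h3 : ℓ ≤ (Finset.univ.biUnion fun i => (P i).toFinset).card) :
    BNS c r ℓ ≤ t :=
  Nat.sInf_le ⟨P, h1, h3, h2⟩

/-- every feasible solution `(x, z)` of the configuration LP (LP2_P) with
time horizon `T` has objective value `∑_{v,t} t·x_{v,t} ≥ BNSLB`. -/
theorem LP2_value_at_least_BNSLB
    {V : Type*} [Fintype V] [DecidableEq V]
    (c : V → V → ℕ) (hc : IsIntMetric c)
    (k : ℕ) (hk : 0 < k) (r : Fin k → V) (T : ℕ)
    (x : V → ℕ → ℝ) (z : ℕ → ((Fin k → List V) →₀ ℝ))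
    (hx0 : ∀ v t, 0 ≤ x v t)
    (hz0 : ∀ t P, 0 ≤ z t P)
    (hzsupp : ∀ t ∈ Finset.Icc 1 T, ∀ P ∈ (z t).support, IsConfig c r t P)
    (hcover : ∀ v : V, (∀ i, v ≠ r i) → 1 ≤ ∑ t ∈ Finset.Icc 1 T, x v t)
    (hz1 : ∀ t ∈ Finset.Icc 1 T, ∑ P ∈ (z t).support, z t P ≤ 1)
    (hvt : ∀ v : V, (∀ i, v ≠ r i) → ∀ t ∈ Finset.Icc 1 T,
      ∑ t' ∈ Finset.Icc 1 t, x v t' ≤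
        ∑ P ∈ (z t).support.filter (fun P => ∃ i, v ∈ P i), z t P) :
    (BNSLB c r : ℝ) ≤
      ∑ v ∈ Finset.univ.filter (fun v => ∀ i, v ≠ r i),
        ∑ t ∈ Finset.Icc 1 T, (t : ℝ) * x v t := by
  classical
  set n := Fintype.card V with hn
  by_cases hSne : ∃ v : V, ∀ i, v ≠ r i
  swap
  · -- all vertices are roots: BNSLB = 0
    push_neg at hSne
    have hB : BNSLB c r = 0 := by
      unfold BNSLB
      refine Finset.sum_eq_zero fun ℓ hℓ => ?_
      rw [Finset.mem_Icc] at hℓ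
      refine Nat.le_zero.mp (BNS_le_of_witness c r (fun i => [r i])
        (fun i => rfl) (fun i => le_refl 0) ?_)
      have hU : (Finset.univ.biUnion fun i => [r i].toFinset) = Finset.univ := by
        ext v
        simp only [Finset.mem_biUnion, Finset.mem_univ, true_and, iff_true,
          List.toFinset_cons, List.toFinset_nil, insert_empty_eq, Finset.mem_singleton]
        obtain ⟨i, hi⟩ := hSne v
        exact ⟨i, hi⟩
      rw [hU, Finset.card_univ]
      exact hℓ.2
    rw [hB]
    push_cast
    refine Finset.sum_nonneg fun v _ => Finset.sum_nonneg fun t _ => ?_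
    exact mul_nonneg (by positivity) (hx0 v t)
  obtain ⟨v0, hv0⟩ := hSne
  -- T ≥ 1
  have hT1 : 1 ≤ T := by
    by_contra hT
    have hT0 : T = 0 := by omega
    have := hcover v0 hv0
    rw [hT0] at this
    simp at this
    linarith
  set S : Finset V := Finset.univ.filter (fun v => ∀ i, v ≠ r i) with hSdef
  set Rset : Finset V := Finset.univ.image r with hRdef
  have hmemS : ∀ v, v ∈ S ↔ ∀ i, v ≠ r i := by
    intro v; simp [hSdef]
  set cnt : ℕ → ℕ := fun t => ((Finset.Icc 1 n).filter (fun ℓ => BNS c r ℓ ≤ t)).card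
    with hcntdef
  have hcnt_le : ∀ t, cnt t ≤ n := by
    intro t
    calc cnt t ≤ (Finset.Icc 1 n).card := Finset.card_filter_le _ _
    _ = n := by rw [Nat.card_Icc]; omega
  -- roots belong to any config's coverage
  have hRsub : ∀ (P : Fin k → List V), (∀ i, (P i).head? = some (r i)) →
      Rset ⊆ Finset.univ.biUnion fun i => (P i).toFinset := by
    intro P hP v hv
    rw [hRdef, Finset.mem_image] at hv
    obtain ⟨i, _, hi⟩ := hv
    exact Finset.mem_biUnion.2 ⟨i, Finset.mem_univ i,
      List.mem_toFinset.2 (hi ▸ head?_mem_aux (hP i))⟩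
  -- cnt t is at least the number of roots
  have hcnt_ge : ∀ t, Rset.card ≤ cnt t := by
    intro t
    have hsub : Finset.Icc 1 Rset.card ⊆
        (Finset.Icc 1 n).filter (fun ℓ => BNS c r ℓ ≤ t) := by
      intro ℓ hℓ
      rw [Finset.mem_Icc] at hℓ
      have hRn : Rset.card ≤ n := by
        rw [hn]; exact Finset.card_le_univ Rset
      refine Finset.mem_filter.2 ⟨Finset.mem_Icc.2 ⟨hℓ.1, le_trans hℓ.2 hRn⟩, ?_⟩
      refine le_trans (BNS_le_of_witness c r (fun i => [r i])
        (fun i => rfl) (fun i => le_refl 0) ?_) (Nat.zero_le t)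
      have hU : (Finset.univ.biUnion fun i => [r i].toFinset) = Rset := by
        ext v
        simp [hRdef, eq_comm]
      rw [hU]; exact hℓ.2
    calc Rset.card = (Finset.Icc 1 Rset.card).card := by rw [Nat.card_Icc]; omega
    _ ≤ cnt t := Finset.card_le_card hsub
  -- Per-config counting bound
  have C1 : ∀ t ∈ Finset.Icc 1 T, ∀ P ∈ (z t).support,
      (S.filter (fun v => ∃ i, v ∈ P i)).card + Rset.card ≤ cnt t := by
    intro t ht P hP
    have hconf := hzsupp t ht P hP
    set U := Finset.univ.biUnion fun i => (P i).toFinset with hUdef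
    have hheads : ∀ i, (P i).head? = some (r i) := fun i => (hconf i).2.1
    have hcosts : ∀ i, walkCost c (P i) ≤ t := fun i => (hconf i).2.2
    have hsubU : S.filter (fun v => ∃ i, v ∈ P i) ∪ Rset ⊆ U := by
      intro v hv
      rcases Finset.mem_union.1 hv with hv | hv
      · obtain ⟨i, hi⟩ := (Finset.mem_filter.1 hv).2
        exact Finset.mem_biUnion.2 ⟨i, Finset.mem_univ i, List.mem_toFinset.2 hi⟩
      · exact hRsub P hheads hv
    have hdisj : Disjoint (S.filter (fun v => ∃ i, v ∈ P i)) Rset := by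
      rw [Finset.disjoint_left]
      intro v hv hvR
      have h1 := (hmemS v).1 (Finset.mem_filter.1 hv).1
      rw [hRdef, Finset.mem_image] at hvR
      obtain ⟨i, _, hi⟩ := hvR
      exact h1 i hi.symm
    have hcard : (S.filter (fun v => ∃ i, v ∈ P i)).card + Rset.card ≤ U.card := by
      rw [← Finset.card_union_of_disjoint hdisj]
      exact Finset.card_le_card hsubU
    have hUn : U.card ≤ n := by rw [hn]; exact Finset.card_le_univ U
    have hsub : Finset.Icc 1 ((S.filter (fun v => ∃ i, v ∈ P i)).card + Rset.card) ⊆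
        (Finset.Icc 1 n).filter (fun ℓ => BNS c r ℓ ≤ t) := by
      intro ℓ hℓ
      rw [Finset.mem_Icc] at hℓ
      refine Finset.mem_filter.2 ⟨Finset.mem_Icc.2 ⟨hℓ.1, by omega⟩,
        BNS_le_of_witness c r P hheads hcosts ?_⟩
      rw [← hUdef]
      omega
    calc (S.filter (fun v => ∃ i, v ∈ P i)).card + Rset.card
        = (Finset.Icc 1 ((S.filter (fun v => ∃ i, v ∈ P i)).card + Rset.card)).card := by
          rw [Nat.card_Icc]; omega
    _ ≤ cnt t := Finset.card_le_card hsub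
  -- L1: bound on prefix sums
  have L1 : ∀ t, t ≤ T →
      (∑ v ∈ S, ∑ t' ∈ Finset.Icc 1 t, x v t') ≤ (cnt t : ℝ) - Rset.card := by
    intro t htT
    have hnonneg : (0 : ℝ) ≤ (cnt t : ℝ) - Rset.card := by
      have := hcnt_ge t
      have : (Rset.card : ℝ) ≤ cnt t := by exact_mod_cast this
      linarith
    rcases Nat.eq_zero_or_pos t with ht0 | ht1
    · subst ht0
      rw [show Finset.Icc 1 0 = (∅ : Finset ℕ) from Finset.Icc_eq_empty (by omega)]
      simpa using hnonneg
    have htm : t ∈ Finset.Icc 1 T := Finset.mem_Icc.2 ⟨ht1, htT⟩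
    calc ∑ v ∈ S, ∑ t' ∈ Finset.Icc 1 t, x v t'
        ≤ ∑ v ∈ S, ∑ P ∈ (z t).support.filter (fun P => ∃ i, v ∈ P i), z t P := by
          refine Finset.sum_le_sum fun v hv => ?_
          exact hvt v ((hmemS v).1 hv) t htm
    _ = ∑ v ∈ S, ∑ P ∈ (z t).support, if ∃ i, v ∈ P i then z t P else 0 := by
          refine Finset.sum_congr rfl fun v _ => ?_
          rw [Finset.sum_filter]
    _ = ∑ P ∈ (z t).support, ∑ v ∈ S, if ∃ i, v ∈ P i then z t P else 0 :=
          Finset.sum_comm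
    _ = ∑ P ∈ (z t).support, ((S.filter (fun v => ∃ i, v ∈ P i)).card : ℝ) * z t P := by
          refine Finset.sum_congr rfl fun P _ => ?_
          rw [← Finset.sum_filter, Finset.sum_const, nsmul_eq_mul]
    _ ≤ ∑ P ∈ (z t).support, ((cnt t : ℝ) - Rset.card) * z t P := by
          refine Finset.sum_le_sum fun P hP => ?_
          refine mul_le_mul_of_nonneg_right ?_ (hz0 t P)
          have := C1 t htm P hP
          have h1 : ((S.filter (fun v => ∃ i, v ∈ P i)).card : ℝ) + Rset.card ≤ cnt t := by
            exact_mod_cast this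
          linarith
    _ = ((cnt t : ℝ) - Rset.card) * ∑ P ∈ (z t).support, z t P := by
          rw [Finset.mul_sum]
    _ ≤ ((cnt t : ℝ) - Rset.card) * 1 :=
          mul_le_mul_of_nonneg_left (hz1 t htm) hnonneg
    _ = (cnt t : ℝ) - Rset.card := mul_one _
  -- All BNS values are at most T
  have hBNS_le_T : ∀ ℓ, ℓ ≤ n → BNS c r ℓ ≤ T := by
    intro ℓ hℓ
    have hTm : T ∈ Finset.Icc 1 T := Finset.mem_Icc.2 ⟨hT1, le_refl T⟩
    -- get some config in support of z T covering v0
    have hge : ∀ v, (∀ i, v ≠ r i) →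
        1 ≤ ∑ P ∈ (z T).support.filter (fun P => ∃ i, v ∈ P i), z T P :=
      fun v hv => le_trans (hcover v hv) (hvt v hv T hTm)
    have hne : ((z T).support.filter (fun P => ∃ i, v0 ∈ P i)).Nonempty := by
      by_contra h
      rw [Finset.not_nonempty_iff_eq_empty] at h
      have := hge v0 hv0
      rw [h, Finset.sum_empty] at this
      linarith
    obtain ⟨P0, hP0⟩ := hne
    have hP0supp : P0 ∈ (z T).support := Finset.mem_of_mem_filter P0 hP0
    have hP0pos : 0 < z T P0 :=
      lt_of_le_of_ne (hz0 T P0) (Ne.symm (Finsupp.mem_support_iff.1 hP0supp))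
    have hcovall : ∀ v, (∀ i, v ≠ r i) → ∃ i, v ∈ P0 i := by
      intro v hv
      by_contra hno
      have hnotmem : P0 ∉ (z T).support.filter (fun P => ∃ i, v ∈ P i) := by
        intro h
        exact hno (Finset.mem_filter.1 h).2
      have hins : insert P0 ((z T).support.filter (fun P => ∃ i, v ∈ P i)) ⊆
          (z T).support := by
        intro Q hQ
        rcases Finset.mem_insert.1 hQ with h | h
        · rw [h]; exact hP0supp
        · exact Finset.mem_of_mem_filter Q h
      have hsum : z T P0 + ∑ P ∈ (z T).support.filter (fun P => ∃ i, v ∈ P i), z T P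
          ≤ ∑ P ∈ (z T).support, z T P := by
        rw [← Finset.sum_insert hnotmem]
        exact Finset.sum_le_sum_of_subset_of_nonneg hins fun Q _ _ => hz0 T Q
      have := hge v hv
      have := hz1 T hTm
      linarith
    have hconf := hzsupp T hTm P0 hP0supp
    have hheads : ∀ i, (P0 i).head? = some (r i) := fun i => (hconf i).2.1
    have hU : (Finset.univ.biUnion fun i => (P0 i).toFinset) = Finset.univ := by
      refine Finset.eq_univ_of_forall fun v => ?_
      by_cases hv : ∀ i, v ≠ r i
      · obtain ⟨i, hi⟩ := hcovall v hv
        exact Finset.mem_biUnion.2 ⟨i, Finset.mem_univ i, List.mem_toFinset.2 hi⟩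
      · push_neg at hv
        obtain ⟨i, hi⟩ := hv
        exact Finset.mem_biUnion.2 ⟨i, Finset.mem_univ i,
          List.mem_toFinset.2 (hi ▸ head?_mem_aux (hheads i))⟩
    refine BNS_le_of_witness c r P0 hheads (fun i => (hconf i).2.2) ?_
    rw [hU, Finset.card_univ]
    exact hℓ
  -- M s : number of ℓ with BNS ℓ ≥ s
  set M : ℕ → ℕ := fun s => ((Finset.Icc 1 n).filter (fun ℓ => s ≤ BNS c r ℓ)).card
    with hMdef
  have hMcnt : ∀ s, 1 ≤ s → M s + cnt (s - 1) = n := by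
    intro s hs
    have hcongr : (Finset.Icc 1 n).filter (fun ℓ => BNS c r ℓ ≤ s - 1) =
        (Finset.Icc 1 n).filter (fun ℓ => ¬ s ≤ BNS c r ℓ) := by
      refine Finset.filter_congr fun ℓ _ => ?_
      constructor
      · intro h; omega
      · intro h; omega
    rw [hMdef, hcntdef]
    simp only []
    rw [hcongr, Finset.card_filter_add_card_filter_not, Nat.card_Icc]
    omega
  -- BNSLB = ∑_{s=1}^{T} M s
  have hBNSLB : BNSLB c r = ∑ s ∈ Finset.Icc 1 T, M s := by
    unfold BNSLB
    calc ∑ ℓ ∈ Finset.Icc 1 n, BNS c r ℓ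
        = ∑ ℓ ∈ Finset.Icc 1 n, ((Finset.Icc 1 T).filter (fun s => s ≤ BNS c r ℓ)).card := by
          refine Finset.sum_congr rfl fun ℓ hℓ => ?_
          rw [Finset.mem_Icc] at hℓ
          have hle := hBNS_le_T ℓ hℓ.2
          have : (Finset.Icc 1 T).filter (fun s => s ≤ BNS c r ℓ) =
              Finset.Icc 1 (BNS c r ℓ) := by
            ext s
            simp only [Finset.mem_filter, Finset.mem_Icc]
            omega
          rw [this, Nat.card_Icc]
          omega
    _ = ∑ ℓ ∈ Finset.Icc 1 n, ∑ s ∈ Finset.Icc 1 T, if s ≤ BNS c r ℓ then 1 else 0 := by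
          refine Finset.sum_congr rfl fun ℓ _ => ?_
          rw [Finset.card_filter]
    _ = ∑ s ∈ Finset.Icc 1 T, ∑ ℓ ∈ Finset.Icc 1 n, if s ≤ BNS c r ℓ then 1 else 0 :=
          Finset.sum_comm
    _ = ∑ s ∈ Finset.Icc 1 T, M s := by
          refine Finset.sum_congr rfl fun s _ => ?_
          rw [hMdef]
          simp only []
          rw [Finset.card_filter]
  -- rewrite objective per vertex
  have hobj : ∀ v, ∑ t ∈ Finset.Icc 1 T, (t : ℝ) * x v t =
      ∑ s ∈ Finset.Icc 1 T,
        ((∑ t' ∈ Finset.Icc 1 T, x v t') - ∑ t' ∈ Finset.Icc 1 (s - 1), x v t') := by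
    intro v
    have key : ∀ s ∈ Finset.Icc 1 T,
        (∑ t' ∈ Finset.Icc 1 T, x v t') - ∑ t' ∈ Finset.Icc 1 (s - 1), x v t' =
        ∑ t' ∈ Finset.Icc 1 T, if s ≤ t' then x v t' else 0 := by
      intro s hs
      rw [Finset.mem_Icc] at hs
      have hsplit : Finset.Icc 1 (s - 1) =
          (Finset.Icc 1 T).filter (fun t' => ¬ s ≤ t') := by
        ext t'
        simp only [Finset.mem_filter, Finset.mem_Icc]
        omega
      rw [hsplit, ← Finset.sum_filter]
      have := Finset.sum_filter_add_sum_filter_not (Finset.Icc 1 T)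
        (fun t' => s ≤ t') (fun t' => x v t')
      linarith
    rw [Finset.sum_congr rfl key, Finset.sum_comm]
    refine Finset.sum_congr rfl fun t ht => ?_
    rw [Finset.mem_Icc] at ht
    have hfilter : (Finset.Icc 1 T).filter (fun s => s ≤ t) = Finset.Icc 1 t := by
      ext s
      simp only [Finset.mem_filter, Finset.mem_Icc]
      omega
    rw [← Finset.sum_filter, hfilter, Finset.sum_const, nsmul_eq_mul, Nat.card_Icc]
    congr 1
  -- sum of X v T over S is at least card S
  have hXT : (S.card : ℝ) ≤ ∑ v ∈ S, ∑ t' ∈ Finset.Icc 1 T, x v t' := by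
    have := Finset.card_nsmul_le_sum S (fun v => ∑ t' ∈ Finset.Icc 1 T, x v t') 1
      (fun v hv => hcover v ((hmemS v).1 hv))
    simpa using this
  -- card S + card Rset = n
  have hSR : S.card + Rset.card = n := by
    have h1 : Rset = Finset.univ.filter (fun v => ¬ ∀ i, v ≠ r i) := by
      ext v
      simp only [hRdef, Finset.mem_image, Finset.mem_filter, Finset.mem_univ, true_and]
      push_neg
      constructor
      · rintro ⟨i, hi⟩; exact ⟨i, hi.symm⟩
      · rintro ⟨i, hi⟩; exact ⟨i, hi.symm⟩
    rw [hSdef, h1, Finset.card_filter_add_card_filter_not, Finset.card_univ]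
  -- final chain
  calc (BNSLB c r : ℝ) = ∑ s ∈ Finset.Icc 1 T, (M s : ℝ) := by
        rw [hBNSLB]; push_cast; ring
  _ ≤ ∑ s ∈ Finset.Icc 1 T,
        ((∑ v ∈ S, ∑ t' ∈ Finset.Icc 1 T, x v t') -
          ∑ v ∈ S, ∑ t' ∈ Finset.Icc 1 (s - 1), x v t') := by
        refine Finset.sum_le_sum fun s hs => ?_
        rw [Finset.mem_Icc] at hs
        have hL1 := L1 (s - 1) (by omega)
        have hM := hMcnt s hs.1
        have hMr : (M s : ℝ) + cnt (s - 1) = n := by exact_mod_cast hM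
        have hSRr : (S.card : ℝ) + Rset.card = n := by exact_mod_cast hSR
        linarith
  _ = ∑ s ∈ Finset.Icc 1 T, ∑ v ∈ S,
        ((∑ t' ∈ Finset.Icc 1 T, x v t') - ∑ t' ∈ Finset.Icc 1 (s - 1), x v t') := by
        refine Finset.sum_congr rfl fun s _ => (Finset.sum_sub_distrib _ _).symm
  _ = ∑ v ∈ S, ∑ s ∈ Finset.Icc 1 T,
        ((∑ t' ∈ Finset.Icc 1 T, x v t') - ∑ t' ∈ Finset.Icc 1 (s - 1), x v t') :=
        Finset.sum_comm
  _ = ∑ v ∈ S, ∑ t ∈ Finset.Icc 1 T, (t : ℝ) * x v t := by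
        refine Finset.sum_congr rfl fun v _ => (hobj v).symm
end

section
/- Let D = (V,A) be an Eulerian digraph with nonnegative integer edge weights (weighted in-degree equals weighted out-degree at every node), fix an integer K ≥ 0 and set Λ_D(x,y) := min{K, λ_D(x,y)}. Let e = (t,u) and f = (u,v) be edges such that splitting off e and f by a given positive integer amount x ≤ min{w_e, w_f} is splittable, i.e., the resulting digraph D^{ef} satisfies λ_{D^{ef}}(a,b) ≥ Λ_D(a,b) for all nodes a,b ≠ u. Let f' = (u,v') be any edge leaving u (possibly f' = f), and let X ⊆ V be a set with u ∉ X and v' ∈ X that is tight for some pair of nodes a,b ≠ u, i.e., a and b are separated by X and min{|δ^in(X)|, |δ^out(X)|} = Λ_D(a,b) (degrees weighted). Then X is still tight for a,b in D^{ef}: min{|δ^in_{D^{ef}}(X)|, |δ^out_{D^{ef}}(X)|} = Λ_{D^{ef}}(a,b), and Λ_{D^{ef}}(a,b) = Λ_D(a,b). -/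
open Finset

/-- Total weight of arcs entering the set `X`. -/
def inW {V : Type*} [Fintype V] [DecidableEq V] (w : V → V → ℕ) (X : Finset V) : ℕ :=
  ∑ p ∈ Xᶜ, ∑ q ∈ X, w p q

/-- Total weight of arcs leaving the set `X`. -/
def outW {V : Type*} [Fintype V] [DecidableEq V] (w : V → V → ℕ) (X : Finset V) : ℕ :=
  ∑ p ∈ X, ∑ q ∈ Xᶜ, w p q

/-- `λ_D(x,y)`: the maximum number of edge-disjoint directed x→y paths; by Menger's
theorem, the minimum total weight of a directed x-y cut, taken as the definition. -/
noncomputable def lambdaW {V : Type*} [Fintype V] [DecidableEq V]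
    (w : V → V → ℕ) (x y : V) : ℕ :=
  sInf {m : ℕ | ∃ X : Finset V, x ∈ X ∧ y ∉ X ∧ outW w X = m}

/-- The weights obtained from `w` by splitting off the edges `e = (t,u)` and `f = (u,v)`
by amount `x`: subtract `x` from `w t u` and `w u v` and add `x` to `w t v`. -/
def splitW {V : Type*} [DecidableEq V] (w : V → V → ℕ) (t u v : V) (x : ℕ) :
    V → V → ℕ :=
  fun a b =>
    w a b + (if a = t ∧ b = v then x else 0)
      - (if a = t ∧ b = u then x else 0) - (if a = u ∧ b = v then x else 0)

/-- `a` and `b` are separated by `X`. -/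
def Separates {V : Type*} (X : Finset V) (a b : V) : Prop :=
  (a ∈ X ∧ b ∉ X) ∨ (a ∉ X ∧ b ∈ X)

lemma sum_pair_ite {V : Type*} [Fintype V] [DecidableEq V] (Y : Finset V) (c d : V) (x : ℕ) :
    ∑ p ∈ Y, ∑ q ∈ Yᶜ, (if p = c ∧ q = d then x else 0)
      = if c ∈ Y ∧ d ∉ Y then x else 0 := by
  have h1 : ∀ p, ∑ q ∈ Yᶜ, (if p = c ∧ q = d then x else 0)
      = if p = c then (if d ∉ Y then x else 0) else 0 := by
    intro p
    by_cases hp : p = c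
    · subst hp
      simp [Finset.sum_ite_eq' Yᶜ d (fun _ => x), Finset.mem_compl]
    · simp [hp]
  rw [Finset.sum_congr rfl (fun p _ => h1 p), Finset.sum_ite_eq' Y c]
  by_cases hc : c ∈ Y <;> by_cases hd : d ∈ Y <;> simp [hc, hd]

lemma outW_splitW {V : Type*} [Fintype V] [DecidableEq V] (w : V → V → ℕ) (t u v : V)
    (hut : t ≠ u) (huv : u ≠ v) (x : ℕ) (hxe : x ≤ w t u) (hxf : x ≤ w u v) (Y : Finset V) :
    outW (splitW w t u v x) Y + (if t ∈ Y ∧ u ∉ Y then x else 0)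
        + (if u ∈ Y ∧ v ∉ Y then x else 0)
      = outW w Y + (if t ∈ Y ∧ v ∉ Y then x else 0) := by
  have hpt : ∀ p q : V, splitW w t u v x p q + (if p = t ∧ q = u then x else 0)
      + (if p = u ∧ q = v then x else 0) = w p q + (if p = t ∧ q = v then x else 0) := by
    intro p q
    unfold splitW
    by_cases h1 : p = t <;> by_cases h2 : p = u <;> by_cases h3 : q = u <;>
      by_cases h4 : q = v <;> simp_all <;> omega
  have key : ∑ p ∈ Y, ∑ q ∈ Yᶜ, (splitW w t u v x p q + (if p = t ∧ q = u then x else 0)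
      + (if p = u ∧ q = v then x else 0))
      = ∑ p ∈ Y, ∑ q ∈ Yᶜ, (w p q + (if p = t ∧ q = v then x else 0)) :=
    Finset.sum_congr rfl fun p _ => Finset.sum_congr rfl fun q _ => hpt p q
  simp only [Finset.sum_add_distrib, sum_pair_ite] at key
  unfold outW
  exact key

lemma inW_eq_outW_compl {V : Type*} [Fintype V] [DecidableEq V] (w : V → V → ℕ)
    (X : Finset V) : inW w X = outW w Xᶜ := by
  unfold inW outW
  rw [compl_compl]

lemma inW_eq_outW {V : Type*} [Fintype V] [DecidableEq V] (w : V → V → ℕ)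
    (heul : ∀ u : V, ∑ a : V, w a u = ∑ a : V, w u a) (X : Finset V) :
    inW w X = outW w X := by
  have h1 : inW w X + ∑ p ∈ X, ∑ q ∈ X, w q p = ∑ p ∈ X, ∑ q : V, w q p := by
    unfold inW
    rw [Finset.sum_comm, ← Finset.sum_add_distrib]
    exact Finset.sum_congr rfl fun p _ => Finset.sum_compl_add_sum X _
  have h2 : outW w X + ∑ p ∈ X, ∑ q ∈ X, w p q = ∑ p ∈ X, ∑ q : V, w p q := by
    unfold outW
    rw [← Finset.sum_add_distrib]
    refine Finset.sum_congr rfl fun p _ => ?_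
    rw [add_comm]
    exact Finset.sum_add_sum_compl X _
  have h3 : ∑ p ∈ X, ∑ q : V, w q p = ∑ p ∈ X, ∑ q : V, w p q :=
    Finset.sum_congr rfl fun p _ => heul p
  have h4 : ∑ p ∈ X, ∑ q ∈ X, w q p = ∑ p ∈ X, ∑ q ∈ X, w p q := Finset.sum_comm
  omega

lemma lambdaW_le {V : Type*} [Fintype V] [DecidableEq V] (w : V → V → ℕ) (a b : V)
    (Y : Finset V) (haY : a ∈ Y) (hbY : b ∉ Y) : lambdaW w a b ≤ outW w Y :=
  Nat.sInf_le ⟨Y, haY, hbY, rfl⟩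

lemma exists_min_cut {V : Type*} [Fintype V] [DecidableEq V] (w : V → V → ℕ) (a b : V)
    (hab : a ≠ b) : ∃ Y : Finset V, a ∈ Y ∧ b ∉ Y ∧ outW w Y = lambdaW w a b := by
  have hne : {m : ℕ | ∃ X : Finset V, a ∈ X ∧ b ∉ X ∧ outW w X = m}.Nonempty :=
    ⟨outW w {a}, {a}, Finset.mem_singleton_self a,
      by simp [Ne.symm hab], rfl⟩
  obtain ⟨Y, h1, h2, h3⟩ := Nat.sInf_mem hne
  exact ⟨Y, h1, h2, h3⟩

/-- monotonicity of tight sets under splitting off: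
in an Eulerian weighted digraph, if splitting off `e = (t,u)`, `f = (u,v)` by amount `x`
is splittable, `f' = (u,v')` is an edge leaving `u`, and `X` with `u ∉ X`, `v' ∈ X` is
tight for some pair `a, b ≠ u`, then `X` is still tight for `a, b` after the splitting,
and `Λ(a,b)` is unchanged. -/
theorem tight_set_monotone_under_splitting
    {V : Type*} [Fintype V] [DecidableEq V]
    (w : V → V → ℕ) (K : ℕ)
    (heul : ∀ u : V, ∑ a : V, w a u = ∑ a : V, w u a)
    (t u v : V) (hut : t ≠ u) (huv : u ≠ v)
    (he : 0 < w t u) (hf : 0 < w u v)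
    (x : ℕ) (hx : 0 < x) (hxe : x ≤ w t u) (hxf : x ≤ w u v)
    (hsplit : ∀ a b : V, a ≠ u → b ≠ u →
      min K (lambdaW w a b) ≤ lambdaW (splitW w t u v x) a b)
    (v' : V) (hv' : 0 < w u v')
    (X : Finset V) (huX : u ∉ X) (hv'X : v' ∈ X)
    (a b : V) (ha : a ≠ u) (hb : b ≠ u) (hsep : Separates X a b)
    (htight : min (inW w X) (outW w X) = min K (lambdaW w a b)) :
    min (inW (splitW w t u v x) X) (outW (splitW w t u v x) X) =
        min K (lambdaW (splitW w t u v x) a b) ∧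
      min K (lambdaW (splitW w t u v x) a b) = min K (lambdaW w a b) := by
  set w' := splitW w t u v x with hw'
  -- splitting decreases all cuts
  have hmono : ∀ Y : Finset V, outW w' Y ≤ outW w Y := by
    intro Y
    have h := outW_splitW w t u v hut huv x hxe hxf Y
    rw [← hw'] at h
    by_cases h1 : t ∈ Y <;> by_cases h2 : u ∈ Y <;> by_cases h3 : v ∈ Y <;>
      simp [h1, h2, h3] at h <;> omega
  have hab : a ≠ b := by
    rcases hsep with ⟨h1, h2⟩ | ⟨h1, h2⟩ <;> rintro rfl <;> [exact h2 h1; exact h1 h2]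
  have hlam_le : lambdaW w' a b ≤ lambdaW w a b := by
    obtain ⟨Y, hY1, hY2, hY3⟩ := exists_min_cut w a b hab
    calc lambdaW w' a b ≤ outW w' Y := lambdaW_le w' a b Y hY1 hY2
      _ ≤ outW w Y := hmono Y
      _ = lambdaW w a b := hY3
  have hS : min K (lambdaW w a b) ≤ lambdaW w' a b := hsplit a b ha hb
  have part2 : min K (lambdaW w' a b) = min K (lambdaW w a b) :=
    le_antisymm (min_le_min le_rfl hlam_le) (le_min (min_le_left _ _) hS)
  -- the change of the two cut values of X
  have hO := outW_splitW w t u v hut huv x hxe hxf X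
  have hI := outW_splitW w t u v hut huv x hxe hxf Xᶜ
  rw [← hw'] at hO hI
  rw [← inW_eq_outW_compl w' X, ← inW_eq_outW_compl w X] at hI
  have hchange : (outW w' X + x = outW w X ∧ inW w' X + x = inW w X ∧ t ∈ X ∧ v ∈ X)
      ∨ (outW w' X = outW w X ∧ inW w' X = inW w X) := by
    by_cases h1 : t ∈ X <;> by_cases h3 : v ∈ X <;>
      simp only [h1, h3, huX, Finset.mem_compl, not_true, not_false_iff, not_not,
        true_and, and_true, false_and, and_false, if_true, if_false] at hO hI
    · exact Or.inl ⟨by omega, by omega, h1, h3⟩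
    · exact Or.inr ⟨by omega, by omega⟩
    · exact Or.inr ⟨by omega, by omega⟩
    · exact Or.inr ⟨by omega, by omega⟩
  have hEU : inW w X = outW w X := inW_eq_outW w heul X
  -- λ' is at most the cut of X in the appropriate direction
  have hl' : lambdaW w' a b ≤ outW w' X ∨ lambdaW w' a b ≤ inW w' X := by
    rcases hsep with ⟨h1, h2⟩ | ⟨h1, h2⟩
    · exact Or.inl (lambdaW_le w' a b X h1 h2)
    · refine Or.inr ?_
      rw [inW_eq_outW_compl w' X]
      exact lambdaW_le w' a b Xᶜ (Finset.mem_compl.2 h1) (by simp [h2])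
  -- conclude
  have hL'le : min K (lambdaW w' a b) ≤ lambdaW w' a b := min_le_right _ _
  rcases hchange with ⟨hc1, hc2, _, _⟩ | ⟨hc1, hc2⟩
  · -- impossible: both cut values drop by x > 0
    exfalso
    rcases hl' with hl' | hl' <;> omega
  · constructor
    · rw [hc1, hc2, hEU, min_self, part2]
      rw [hEU, min_self] at htight
      omega
    · exact part2
end
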